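/- arXiv:math/0605574 — 3 statements merged into one kernel-verified Lean document; each statement's English description precedes it below -/
import Mathlib

section
/- Let e > 0 and r > 1 be integers. If {a_i}_{i≥0} is a sequence of positive integers satisfying a_i = e·a_{i+1} − r·a_{i+2} for all i ≥ 0, then the sequence is constant, i.e., a_i = a_0 for all i ≥ 0. -/
/-- Let `e > 0` and `r > 1` be integers.  If `{a_i}_{i ≥ 0}` is a sequence of positive
integers satisfying `a i = e * a (i+1) - r * a (i+2)` for all `i ≥ 0`, then the sequence
is constant. -/
theorem constant_of_recurrence (e r : ℤ) (he : 0 < e) (hr : 1 < r)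
    (a : ℕ → ℤ) (hpos : ∀ i, 0 < a i)
    (hrec : ∀ i, a i = e * a (i + 1) - r * a (i + 2)) :
    ∀ i, a i = a 0 := by
  set D : ℕ → ℤ := fun n => a (n+1)^2 - a n * a (n+2) with hD
  have hstep : ∀ n, D n = r * D (n+1) := by
    intro n
    simp only [hD]
    linear_combination a (n+1) * hrec (n+1) - a (n+2) * hrec n
  have hpow : ∀ n, D 0 = r^n * D n := by
    intro n; induction n with
    | zero => simp
    | succ k ih => rw [ih, hstep k]; ring
  have hD0 : D 0 = 0 := by
    have h2 : ((D 0).natAbs : ℤ) < 2 ^ (D 0).natAbs := by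
      exact_mod_cast Nat.lt_two_pow_self
    apply Int.eq_zero_of_abs_lt_dvd (m := r ^ (D 0).natAbs) ⟨D _, hpow _⟩
    calc |D 0| = ((D 0).natAbs : ℤ) := Int.abs_eq_natAbs _
      _ < 2 ^ (D 0).natAbs := h2
      _ ≤ r ^ (D 0).natAbs := pow_le_pow_left₀ (by norm_num) (by omega) _
  have hDn : ∀ n, D n = 0 := by
    intro n
    have h := hpow n
    have hrn : (r:ℤ)^n ≠ 0 := pow_ne_zero _ (by omega)
    rw [hD0] at h
    exact ((mul_eq_zero.mp h.symm).resolve_left hrn)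
  -- constant ratio
  have hgeo : ∀ n, a (n+1) * a 0 = a n * a 1 := by
    intro n; induction n with
    | zero => ring
    | succ k ih =>
      have hk := hDn k
      simp only [hD] at hk
      have hne : a k ≠ 0 := (hpos k).ne'
      have hmul : a (k+2) * a 0 * a k = a (k+1) * a 1 * a k := by
        linear_combination (-(a 0)) * hk + a (k+1) * ih
      exact mul_right_cancel₀ hne hmul
  -- quadratic identity for the ratio
  have hid : r * a 1 ^ 2 + a 0 ^ 2 = e * (a 0 * a 1) := by
    have h0 := hDn 0
    simp only [hD] at h0
    linear_combination r * h0 + a 0 * hrec 0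
  have ha0 := hpos 0
  have ha1 := hpos 1
  -- a 1 ≤ a 0 via the gcd (rational root) argument
  have hle : a 1 ≤ a 0 := by
    have hgpos : 0 < Int.gcd (a 0) (a 1) := by
      rw [Int.gcd_pos_iff]; exact Or.inl ha0.ne'
    set g : ℤ := (Int.gcd (a 0) (a 1) : ℤ) with hg
    have hgz : 0 < g := by rw [hg]; exact_mod_cast hgpos
    have hdvd0 : g ∣ a 0 := Int.gcd_dvd_left _ _
    have hdvd1 : g ∣ a 1 := Int.gcd_dvd_right _ _
    obtain ⟨u, hu⟩ := hdvd0
    obtain ⟨v, hv⟩ := hdvd1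
    have hvpos : 0 < v := by
      by_contra hvn
      push_neg at hvn
      nlinarith
    have hupos : 0 < u := by
      by_contra hun
      push_neg at hun
      nlinarith
    have hco : IsCoprime u v := by
      rw [Int.isCoprime_iff_gcd_eq_one]
      have h1 : u = a 0 / g := by
        rw [hu]; rw [Int.mul_ediv_cancel_left _ hgz.ne']
      have h2 : v = a 1 / g := by
        rw [hv]; rw [Int.mul_ediv_cancel_left _ hgz.ne']
      rw [h1, h2, hg]
      exact Int.gcd_div_gcd_div_gcd hgpos
    -- reduced identity: r*v^2 + u^2 = e*u*v
    have hidr : r * v ^ 2 + u ^ 2 = e * (u * v) := by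
      have hg2 : g ^ 2 ≠ 0 := pow_ne_zero _ hgz.ne'
      have : g ^ 2 * (r * v ^ 2 + u ^ 2) = g ^ 2 * (e * (u * v)) := by
        have := hid
        rw [hu, hv] at this
        ring_nf at this ⊢
        linarith
      exact mul_left_cancel₀ hg2 this
    have hvdvd : v ∣ u * u := ⟨e * u - r * v, by linarith [hidr, mul_comm u u]⟩
    have hunit : IsUnit v := (hco.mul_left hco).isUnit_of_dvd' hvdvd dvd_rfl
    have hv1 : v = 1 := by
      rcases Int.isUnit_iff.mp hunit with h | h
      · exact h
      · omega
    have : a 1 ∣ a 0 := by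
      rw [hv, hv1, mul_one]
      exact ⟨u, hu⟩
    exact Int.le_of_dvd ha0 this
  -- a 1 < a 0 is impossible (infinite descent)
  have hnotlt : ¬ a 1 < a 0 := by
    intro hlt
    have hdec : ∀ n : ℕ, a n ≤ a 0 - n := by
      intro n; induction n with
      | zero => simp
      | succ k ih =>
        have hgk := hgeo k
        have h2 : a (k+1) < a k := by nlinarith [hpos k, hpos (k+1)]
        have : a (k+1) ≤ a 0 - k - 1 := by linarith
        push_cast
        linarith
    have := hdec (a 0).toNat
    have hc : ((a 0).toNat : ℤ) = a 0 := Int.toNat_of_nonneg ha0.le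
    rw [hc] at this
    linarith [hpos (a 0).toNat]
  have heq : a 1 = a 0 := le_antisymm hle (not_lt.mp hnotlt)
  intro i
  induction i with
  | zero => rfl
  | succ k ih =>
    have := hgeo k
    rw [heq, ih] at this
    exact mul_right_cancel₀ ha0.ne' this
end

section
/- Let e > 0 and r > 1 be integers. If there exists a sequence of positive integers {a_i}_{i≥0} satisfying a_i = e·a_{i+1} − r·a_{i+2} for all i ≥ 0, then e = r + 1. -/
/-- Let `e > 0` and `r > 1` be integers.  If there exists a sequence of positive integers
`{a_i}_{i ≥ 0}` satisfying `a i = e * a (i+1) - r * a (i+2)` for all `i ≥ 0`,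
then `e = r + 1`. -/
theorem e_eq_r_add_one_of_recurrence (e r : ℤ) (he : 0 < e) (hr : 1 < r)
    (h : ∃ a : ℕ → ℤ, (∀ i, 0 < a i) ∧ ∀ i, a i = e * a (i + 1) - r * a (i + 2)) :
    e = r + 1 := by
  obtain ⟨a, hpos, hrec⟩ := h
  have hr0 : (0:ℤ) < r := by linarith
  -- the "Casoratian" satisfies D i = r * D (i+1)
  set D : ℕ → ℤ := fun i => a (i+1)^2 - a i * a (i+2) with hDdef
  have hstep : ∀ i, D i = r * D (i+1) := by
    intro i
    have h1 := hrec i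
    have h2 := hrec (i+1)
    simp only [hDdef]
    have e1 : a (i+1+1) = a (i+2) := by norm_num
    have e2 : a (i+1+2) = a (i+3) := by ring_nf
    rw [e1, e2]
    rw [e1, e2] at h2
    linear_combination a (i+1) * h2 - a (i+2) * h1
  have hpow : ∀ i, D 0 = r^i * D i := by
    intro i; induction i with
    | zero => simp
    | succ n ih => rw [ih, hstep n]; ring
  have hD0 : D 0 = 0 := by
    by_contra h0
    set i := (D 0).natAbs + 1 with hi
    have hlt : (D 0).natAbs < 2^i := by
      calc (D 0).natAbs < (D 0).natAbs + 1 := Nat.lt_succ_self _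
        _ ≤ 2 ^ ((D 0).natAbs + 1) := Nat.le_of_lt Nat.lt_two_pow_self
    have hdvd : r^i ∣ |D 0| := (dvd_abs _ _).mpr ⟨D i, hpow i⟩
    have hle : r^i ≤ |D 0| := Int.le_of_dvd (abs_pos.mpr h0) hdvd
    have h2r : (2:ℤ)^i ≤ r^i := pow_le_pow_left₀ (by norm_num) (by linarith) i
    have : |D 0| < 2^i := by
      rw [Int.abs_eq_natAbs]
      exact_mod_cast hlt
    linarith
  have hDi : ∀ i, D i = 0 := by
    intro i
    have := hpow i
    rw [hD0] at this
    have hrpow : (r:ℤ)^i ≠ 0 := pow_ne_zero i (by linarith)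
    exact (mul_eq_zero.mp this.symm).resolve_left hrpow
  -- geometric
  have hgeo : ∀ n, a 0 * a (n+1) = a 1 * a n := by
    intro n; induction n with
    | zero => ring
    | succ n ih =>
      have hd := hDi n
      simp only [hDdef] at hd
      have hc : a n * (a 0 * a (n+1+1)) = a n * (a 1 * a (n+1)) := by
        have : a (n+1)^2 = a n * a (n+2) := by linarith
        calc a n * (a 0 * a (n+2)) = a 0 * (a n * a (n+2)) := by ring
          _ = a 0 * a (n+1)^2 := by rw [this]
          _ = (a 0 * a (n+1)) * a (n+1) := by ring
          _ = (a 1 * a n) * a (n+1) := by rw [ih]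
          _ = a n * (a 1 * a (n+1)) := by ring
      exact mul_left_cancel₀ (hpos n).ne' hc
  have hpown : ∀ n, a 0 ^ n * a n = a 1 ^ n * a 0 := by
    intro n; induction n with
    | zero => ring
    | succ n ih =>
      calc a 0 ^ (n+1) * a (n+1) = a 0 ^ n * (a 0 * a (n+1)) := by ring
        _ = a 0 ^ n * (a 1 * a n) := by rw [hgeo n]
        _ = a 1 * (a 0 ^ n * a n) := by ring
        _ = a 1 * (a 1 ^ n * a 0) := by rw [ih]
        _ = a 1 ^ (n+1) * a 0 := by ring
  -- gcd argument
  have hgnat : 0 < Int.gcd (a 0) (a 1) := Int.gcd_pos_of_ne_zero_left (a 1) (hpos 0).ne'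
  set g : ℤ := (Int.gcd (a 0) (a 1) : ℤ) with hg
  have hgpos : (0:ℤ) < g := by rw [hg]; exact_mod_cast hgnat
  set m : ℤ := a 0 / g with hm
  set k : ℤ := a 1 / g with hk
  have ha0 : a 0 = g * m := (Int.ediv_mul_cancel (Int.gcd_dvd_left _ _)).symm.trans (mul_comm _ _)
  have ha1 : a 1 = g * k := (Int.ediv_mul_cancel (Int.gcd_dvd_right _ _)).symm.trans (mul_comm _ _)
  have hmpos : 0 < m := by
    rcases lt_trichotomy m 0 with h'|h'|h'
    · nlinarith [hpos 0]
    · rw [h'] at ha0; simp at ha0; exact absurd ha0 (hpos 0).ne'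
    · exact h'
  have hkpos : 0 < k := by
    rcases lt_trichotomy k 0 with h'|h'|h'
    · nlinarith [hpos 1]
    · rw [h'] at ha1; simp at ha1; exact absurd ha1 (hpos 1).ne'
    · exact h'
  have hcop : IsCoprime m k := by
    rw [Int.isCoprime_iff_gcd_eq_one]
    exact Int.gcd_div_gcd_div_gcd hgnat
  -- m^n ∣ g * m  for all n
  have hmdvd : ∀ n, m ^ n ∣ g * m := by
    intro n
    have h1 := hpown n
    rw [ha0, ha1] at h1
    have h2 : (g:ℤ)^n * (m ^ n * a n) = g^n * (k ^ n * (g * m)) := by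
      ring_nf; ring_nf at h1; linarith
    have h3 : m ^ n * a n = k ^ n * (g * m) :=
      mul_left_cancel₀ (pow_ne_zero n hgpos.ne') h2
    have : m ^ n ∣ k ^ n * (g * m) := ⟨a n, by linarith [h3]⟩
    exact (IsCoprime.pow (hcop.symm) (m := n) (n := n)).symm.dvd_of_dvd_mul_left this
  have hm1 : m = 1 := by
    by_contra hm1
    have hm2 : 2 ≤ m := by omega
    set n := (g*m).natAbs + 1 with hn
    have hle : m ^ n ≤ g * m := Int.le_of_dvd (by positivity) (hmdvd n)
    have h2n : (2:ℤ)^n ≤ m^n := pow_le_pow_left₀ (by norm_num) hm2 n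
    have hlt : g * m < 2^n := by
      have : (g*m).natAbs < 2^n := by
        calc (g*m).natAbs < (g*m).natAbs + 1 := Nat.lt_succ_self _
          _ ≤ 2 ^ ((g*m).natAbs + 1) := Nat.le_of_lt Nat.lt_two_pow_self
      calc g * m ≤ |g * m| := le_abs_self _
        _ = ((g*m).natAbs : ℤ) := by rw [Int.abs_eq_natAbs]
        _ < 2^n := by exact_mod_cast this
    linarith
  rw [hm1, mul_one] at ha0
  -- now a 0 = g, a 1 = g * k, a 2 = g * k^2
  have hd0 := hDi 0
  simp only [hDdef] at hd0
  have ha2 : a 2 = g * k^2 := by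
    have h1 : a 1 ^ 2 = a 0 * a 2 := by linarith
    rw [ha1, ha0] at h1
    have : g * (g * k^2) = g * a 2 := by ring_nf; ring_nf at h1; linarith
    exact (mul_left_cancel₀ hgpos.ne' this).symm
  have hrec0 := hrec 0
  rw [ha0, ha1, ha2] at hrec0
  have hkey : k * (e - r * k) = 1 := by
    have : g * 1 = g * (k * (e - r * k)) := by ring_nf; ring_nf at hrec0; linarith
    have := mul_left_cancel₀ hgpos.ne' this
    linarith
  have hk1 : k = 1 := Int.eq_one_of_mul_eq_one_right hkpos.le hkey
  rw [hk1] at hkey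
  linarith
end

section
/- Let e > 0 and r > 1 be integers. If {a_i}_{i≥0} is a sequence of positive integers satisfying a_i = e·a_{i+1} − r·a_{i+2} for all i ≥ 0, then a_i·a_{i+2} = a_{i+1}² for all i ≥ 0. -/
/-- Let `e > 0` and `r > 1` be integers.  If `{a_i}_{i ≥ 0}` is a sequence of positive
integers satisfying `a i = e * a (i+1) - r * a (i+2)` for all `i ≥ 0`, then
`a i * a (i+2) = (a (i+1))²` for all `i ≥ 0`. -/
theorem mul_eq_sq_of_recurrence (e r : ℤ) (he : 0 < e) (hr : 1 < r)
    (a : ℕ → ℤ) (hpos : ∀ i, 0 < a i)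
    (hrec : ∀ i, a i = e * a (i + 1) - r * a (i + 2)) :
    ∀ i, a i * a (i + 2) = a (i + 1) ^ 2 := by
  set d : ℕ → ℤ := fun j => a j * a (j + 2) - a (j + 1) ^ 2 with hd
  have key : ∀ j, d j = r * d (j + 1) := by
    intro j
    have h1 := hrec j
    have h2 := hrec (j + 1)
    simp only [hd]
    push_cast
    linear_combination a (j + 2) * h1 - a (j + 1) * h2
  have pow : ∀ k j, d j = r ^ k * d (j + k) := by
    intro k
    induction k with
    | zero => simp
    | succ n ih =>
      intro j
      rw [ih j, key (j + n)]
      ring_nf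
  intro i
  have hzero : d i = 0 := by
    by_contra hne
    set n := (d i).natAbs with hn
    have hdvd : r ^ n ∣ |d i| := (dvd_abs _ _).mpr ⟨d (i + n), pow n i⟩
    have hle : r ^ n ≤ |d i| := Int.le_of_dvd (abs_pos.mpr hne) hdvd
    have habs : |d i| = (n : ℤ) := Int.abs_eq_natAbs (d i)
    have h2 : (2 : ℤ) ^ n ≤ r ^ n := pow_le_pow_left₀ (by norm_num) (by omega) n
    have hlt : (n : ℤ) < 2 ^ n := by exact_mod_cast Nat.lt_two_pow_self (n := n)
    omega
  have := hzero
  simp only [hd] at this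
  linarith
end
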